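/- An indefinite odd unimodular symmetric bilinear form over ℤ of rank r and signature s with r ≡ s mod 2 and |s| < r is isomorphic to the diagonal form ⟨1⟩^⊕p ⊕ ⟨−1⟩^⊕q where p = (r+s)/2 and q = (r−s)/2, in the special case of rank 2 and signature 0: every odd indefinite unimodular symmetric bilinear form on ℤ² is isomorphic to ⟨1⟩ ⊕ ⟨−1⟩. -/

import Mathlib

open Matrix

private theorem key17 (p q r s : ℤ) (h : p*r + q*s + 2*r*s = 1) :
    !![r, -(q+r); s, p+s].det = 1 ∧
    !![r, -(q+r); s, p+s]ᵀ * !![p*(p+2*s), p*q+1; p*q+1, q*(q+2*r)] * !![r, -(q+r); s, p+s]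
      = !![1,0;0,-1] := by
  refine ⟨by rw [Matrix.det_fin_two_of]; linear_combination h, ?_⟩
  ext i j
  fin_cases i <;> fin_cases j <;>
    simp [Matrix.mul_apply, Fin.sum_univ_two, Matrix.vecHead, Matrix.vecTail]
  · linear_combination (p*r+q*s+1) * h
  · linear_combination (q*s - p*r) * h
  · linear_combination (q*s - p*r) * h
  · linear_combination (2*(q+r)*(p+s) - (1 + p*r+q*s+2*r*s)) * h

private theorem main_case17 (a b c : ℤ) (ha : Odd a) (hdet : a * c = b * b - 1) :
    ∃ P : Matrix (Fin 2) (Fin 2) ℤ, IsUnit P.det ∧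
      Pᵀ * !![a, b; b, c] * P = !![1, 0; 0, -1] := by
  have ha0 : a ≠ 0 := by rintro rfl; exact (Int.not_odd_iff_even.mpr Even.zero) ha
  set G : ℤ := (Int.gcd a (b + 1) : ℤ) with hGdef
  have hG0 : G ≠ 0 := by
    simp only [hGdef, ne_eq, Int.natCast_eq_zero]
    exact fun h => ha0 (Int.gcd_eq_zero_iff.mp h).1
  obtain ⟨p, hp⟩ : G ∣ a := Int.gcd_dvd_left a (b + 1)
  obtain ⟨k, hk⟩ : G ∣ b + 1 := Int.gcd_dvd_right a (b + 1)
  have hcop : IsCoprime p k := by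
    rw [Int.isCoprime_iff_gcd_eq_one]
    have h1 : a / G = p := by rw [hp, Int.mul_ediv_cancel_left _ hG0]
    have h2 : (b + 1) / G = k := by rw [hk, Int.mul_ediv_cancel_left _ hG0]
    have hpos : 0 < Int.gcd a (b + 1) := Int.gcd_pos_of_ne_zero_left _ ha0
    rw [← h1, ← h2, hGdef]
    exact Int.gcd_div_gcd_div_gcd hpos
  have hGodd : Odd G ∧ Odd p := (Int.odd_mul).mp (hp ▸ ha)
  obtain ⟨hGo, hpo⟩ := hGodd
  have hp0 : p ≠ 0 := by rintro rfl; exact (Int.not_odd_iff_even.mpr Even.zero) hpo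
  have hpk : p * c = k * (b - 1) := by
    have h : G * (p * c) = G * (k * (b - 1)) := by linear_combination hdet - c * hp + (b - 1) * hk
    exact mul_left_cancel₀ hG0 h
  obtain ⟨q, hq⟩ : p ∣ b - 1 := by
    have hdvd : p ∣ k * (b - 1) := ⟨c, hpk.symm⟩
    exact (IsCoprime.dvd_of_dvd_mul_left hcop hdvd)
  have hc : c = k * q := by
    have h : p * c = p * (k * q) := by linear_combination hpk + k * hq
    exact mul_left_cancel₀ hp0 h
  have h2 : G * k - p * q = 2 := by linear_combination hq - hk
  obtain ⟨g1, hg1⟩ := hGo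
  obtain ⟨p1, hp1⟩ := hpo
  set r : ℤ := 1 - g1 * k + p1 * q with hrdef
  set s : ℤ := g1 - p1 with hsdef
  have hr : 2 * r = k - q := by rw [hrdef]; linear_combination -h2 + k * hg1 - q * hp1
  have hs : 2 * s = G - p := by rw [hsdef]; linear_combination hp1 - hg1
  have hL : p * r + q * s + 2 * r * s = 1 := by
    have h2L : 2 * (p * r + q * s + 2 * r * s) = 2 * 1 := by
      linear_combination p * hr + q * hs + 2 * r * hs + (G - p) * hr + h2
    exact mul_left_cancel₀ two_ne_zero h2L
  obtain ⟨hd, hm⟩ := key17 p q r s hL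
  have e11 : a = p * (p + 2 * s) := by linear_combination hp - p * hs
  have e12 : b = p * q + 1 := by linear_combination hq
  have e22 : c = q * (q + 2 * r) := by linear_combination hc - q * hr
  refine ⟨!![r, -(q+r); s, p+s], by rw [hd]; exact isUnit_one, ?_⟩
  rw [e11, e12, e22] at *
  exact hm

private theorem quad17 (a b c : ℤ) (x : Fin 2 → ℤ) :
    x ⬝ᵥ (!![a, b; b, c]).mulVec x
      = a * (x 0)^2 + 2 * b * (x 0) * (x 1) + c * (x 1)^2 := by
  simp [Matrix.mulVec, dotProduct, Fin.sum_univ_two, Matrix.vecHead, Matrix.vecTail]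
  ring

/-- Every odd indefinite unimodular symmetric bilinear form on ℤ² is isomorphic (equivalent over
ℤ, i.e. by a change of basis in `GL(2, ℤ)`) to the diagonal form `⟨1⟩ ⊕ ⟨−1⟩`. -/
theorem stmt17 (A : Matrix (Fin 2) (Fin 2) ℤ) (hsym : Aᵀ = A)
    (huni : A.det = 1 ∨ A.det = -1)
    (hodd : ∃ x : Fin 2 → ℤ, Odd (x ⬝ᵥ A.mulVec x))
    (hindef : (∃ x : Fin 2 → ℤ, 0 < x ⬝ᵥ A.mulVec x) ∧
              (∃ y : Fin 2 → ℤ, y ⬝ᵥ A.mulVec y < 0)) :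
    ∃ P : Matrix (Fin 2) (Fin 2) ℤ, IsUnit P.det ∧
      Pᵀ * A * P = !![1, 0; 0, -1] := by
  have h10 : A 1 0 = A 0 1 := by
    have := congrFun (congrFun hsym 1) 0
    simpa [Matrix.transpose_apply] using this.symm
  have hA : A = !![A 0 0, A 0 1; A 0 1, A 1 1] := by
    conv_lhs => rw [Matrix.eta_fin_two A]
    rw [h10]
  set a := A 0 0
  set b := A 0 1
  set c := A 1 1
  rw [hA] at huni hodd hindef ⊢
  rw [Matrix.det_fin_two_of] at huni
  -- rule out determinant 1
  obtain ⟨⟨x, hx⟩, ⟨y, hy⟩⟩ := hindef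
  rw [quad17] at hx hy
  have hdet : a * c - b * b = -1 := by
    rcases huni with h1 | h1
    · exfalso
      have hS1 : 0 ≤ a * (a * (x 0)^2 + 2 * b * (x 0) * (x 1) + c * (x 1)^2) := by
        nlinarith [sq_nonneg (a * x 0 + b * x 1), sq_nonneg (x 1)]
      have hS2 : 0 ≤ a * (a * (y 0)^2 + 2 * b * (y 0) * (y 1) + c * (y 1)^2) := by
        nlinarith [sq_nonneg (a * y 0 + b * y 1), sq_nonneg (y 1)]
      have ha1 : 0 ≤ a := by nlinarith
      have ha2 : a ≤ 0 := by nlinarith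
      have ha : a = 0 := le_antisymm ha2 ha1
      rw [ha] at h1
      nlinarith [sq_nonneg b]
    · exact h1
  have hdet' : a * c = b * b - 1 := by linarith
  -- oddness: a or c is odd
  obtain ⟨z, hz⟩ := hodd
  rw [quad17] at hz
  have hoddac : Odd a ∨ Odd c := by
    by_contra h
    push_neg at h
    obtain ⟨ha, hc⟩ := h
    rw [Int.not_odd_iff_even] at ha hc
    obtain ⟨a1, ha1⟩ := ha
    obtain ⟨c1, hc1⟩ := hc
    have : Even (a * (z 0)^2 + 2 * b * (z 0) * (z 1) + c * (z 1)^2) :=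
      ⟨a1 * (z 0)^2 + b * (z 0) * (z 1) + c1 * (z 1)^2, by rw [ha1, hc1]; ring⟩
    exact (Int.not_odd_iff_even.mpr this) hz
  rcases hoddac with hoa | hoc
  · exact main_case17 a b c hoa hdet'
  · obtain ⟨P₀, hPu, hPm⟩ := main_case17 c b a hoc (by linear_combination hdet')
    refine ⟨!![(0:ℤ), 1; 1, 0] * P₀, ?_, ?_⟩
    · rw [Matrix.det_mul, Matrix.det_fin_two_of]
      simpa using hPu.neg
    · have hswap : (!![(0:ℤ), 1; 1, 0])ᵀ * !![a, b; b, c] * !![(0:ℤ), 1; 1, 0]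
          = !![c, b; b, a] := by
        ext i j
        fin_cases i <;> fin_cases j <;>
          simp [Matrix.mul_apply, Fin.sum_univ_two, Matrix.vecHead, Matrix.vecTail]
      calc (!![(0:ℤ), 1; 1, 0] * P₀)ᵀ * !![a, b; b, c] * (!![(0:ℤ), 1; 1, 0] * P₀)
          = P₀ᵀ * ((!![(0:ℤ), 1; 1, 0])ᵀ * !![a, b; b, c] * !![(0:ℤ), 1; 1, 0]) * P₀ := by
            simp only [Matrix.transpose_mul, Matrix.mul_assoc]
        _ = P₀ᵀ * !![c, b; b, a] * P₀ := by rw [hswap]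
        _ = !![1, 0; 0, -1] := hPm
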